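/- Let (N,v) be a minimal incomplete game with total excess Δ and n ≥ 2 players, and let A = (α_T)_{T∈N₁} satisfy α_T ≥ 0 and Σ_{T∈N₁} α_T = 1. Then for every player i the Shapley value of the game w_A satisfies φ_i(w_A) = v({i}) + Δ Σ_{T∈N₁, i∈T} α_T / |T|. -/

import Mathlib

open Finset

/-- The Shapley value `φ_i(w) = (1/n) ∑_{S ⊆ N∖{i}} C(n-1,|S|)⁻¹ (w(S∪{i}) - w(S))`. -/
noncomputable def shapley (n : ℕ) (w : Finset (Fin n) → ℝ) (i : Fin n) : ℝ :=
  (1 / (n : ℝ)) * ∑ S ∈ (Finset.univ.erase i).powerset,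
    ((Nat.choose (n - 1) S.card : ℝ))⁻¹ * (w (insert i S) - w S)

/-- A game is convex if `w(S) + w(T) ≤ w(S ∪ T) + w(S ∩ T)` for all coalitions. -/
def IsConvexGame {n : ℕ} (w : Finset (Fin n) → ℝ) : Prop :=
  ∀ S T : Finset (Fin n), w S + w T ≤ w (S ∪ T) + w (S ∩ T)

/-- The upper vector `b^w_i = w(N) - w(N∖{i})`. -/
noncomputable def upperVec {n : ℕ} (w : Finset (Fin n) → ℝ) (i : Fin n) : ℝ :=
  w Finset.univ - w (Finset.univ.erase i)

/-- The gap function `g^w(S) = ∑_{i∈S} b^w_i - w(S)`. -/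
noncomputable def gap {n : ℕ} (w : Finset (Fin n) → ℝ) (S : Finset (Fin n)) : ℝ :=
  (∑ i ∈ S, upperVec w i) - w S

/-- A game is 1-convex if `∑ b^w_i ≥ w(N)` and
`w(S) ≤ w(N) - ∑_{i ∈ N∖S} b^w_i` for every nonempty `S`. -/
def IsOneConvex {n : ℕ} (w : Finset (Fin n) → ℝ) : Prop :=
  w Finset.univ ≤ (∑ i, upperVec w i) ∧
  ∀ S : Finset (Fin n), S.Nonempty →
    w S ≤ w Finset.univ - ∑ i ∈ Finset.univ \ S, upperVec w i

/-- `w` is an extension of the minimal incomplete game given by singleton values `v`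
and grand-coalition value `vN`. -/
def IsExtension {n : ℕ} (v : Fin n → ℝ) (vN : ℝ) (w : Finset (Fin n) → ℝ) : Prop :=
  w ∅ = 0 ∧ (∀ i, w {i} = v i) ∧ w Finset.univ = vN

/-- Harsanyi dividend `d_w(T) = ∑_{S ⊆ T} (-1)^{|T|-|S|} w(S)`. -/
noncomputable def dividend {n : ℕ} (w : Finset (Fin n) → ℝ) (T : Finset (Fin n)) : ℝ :=
  ∑ S ∈ T.powerset, (-1 : ℝ) ^ (T.card - S.card) * w S

/-- A game is positive if all Harsanyi dividends of nonempty coalitions are nonnegative. -/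
def IsPositive {n : ℕ} (w : Finset (Fin n) → ℝ) : Prop :=
  ∀ T : Finset (Fin n), T.Nonempty → 0 ≤ dividend w T

/-- The extreme game `v^k`. -/
noncomputable def vgame (n : ℕ) (v : Fin n → ℝ) (Δ : ℝ) (k : Fin n)
    (S : Finset (Fin n)) : ℝ :=
  if 2 ≤ S.card ∧ k ∈ S then (∑ j ∈ S, v j) + Δ else ∑ j ∈ S, v j

/-- The extreme game `v_T` (for `T` with `|T| ≥ 2`). -/
noncomputable def vTgame (n : ℕ) (v : Fin n → ℝ) (Δ : ℝ) (T : Finset (Fin n))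
    (S : Finset (Fin n)) : ℝ :=
  if T ⊆ S then (∑ j ∈ S, v j) + Δ else ∑ j ∈ S, v j

/-- The extreme-ray game `e_T`. -/
def eTgame (n : ℕ) (T S : Finset (Fin n)) : ℝ := if S = T then -1 else 0

/-- The index set `E = {T ⊆ N : 2 ≤ |T| ≤ n-2}`. -/
def raysIndex (n : ℕ) : Finset (Finset (Fin n)) :=
  Finset.univ.filter (fun T => 2 ≤ T.card ∧ T.card ≤ n - 2)

/-- The index set `N₁ = {T ⊆ N : |T| ≥ 2}`. -/
def coalN1 (n : ℕ) : Finset (Finset (Fin n)) :=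
  Finset.univ.filter (fun T => 2 ≤ T.card)

/-- The convex combination `w_α = ∑_k α_k v^k`. -/
noncomputable def walpha (n : ℕ) (v : Fin n → ℝ) (Δ : ℝ) (α : Fin n → ℝ)
    (S : Finset (Fin n)) : ℝ :=
  ∑ k, α k * vgame n v Δ k S

/-- The game `w_{α,β} = ∑_k α_k v^k + ∑_{T∈E} β_T e_T`. -/
noncomputable def walphabeta (n : ℕ) (v : Fin n → ℝ) (Δ : ℝ) (α : Fin n → ℝ)
    (β : Finset (Fin n) → ℝ) (S : Finset (Fin n)) : ℝ :=
  (∑ k, α k * vgame n v Δ k S) + ∑ T ∈ raysIndex n, β T * eTgame n T S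

/-- The game `w_A = ∑_{T∈N₁} α_T v_T`. -/
noncomputable def wAgame (n : ℕ) (v : Fin n → ℝ) (Δ : ℝ) (A : Finset (Fin n) → ℝ)
    (S : Finset (Fin n)) : ℝ :=
  ∑ T ∈ coalN1 n, A T * vTgame n v Δ T S

/-- The imputation set `I(v)`. -/
def imputations (n : ℕ) (v : Fin n → ℝ) (vN : ℝ) : Set (Fin n → ℝ) :=
  {x | (∑ i, x i) = vN ∧ ∀ i, v i ≤ x i}

/-- The imputation `I^k`. -/
noncomputable def Ik (n : ℕ) (v : Fin n → ℝ) (Δ : ℝ) (k : Fin n) : Fin n → ℝ :=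
  fun i => if i = k then v i + Δ else v i

/-- The imputation `I^α`. -/
noncomputable def Ialpha (n : ℕ) (v : Fin n → ℝ) (Δ : ℝ) (α : Fin n → ℝ) : Fin n → ℝ :=
  fun i => v i + α i * Δ

/-- The core of a game. -/
def core {n : ℕ} (w : Finset (Fin n) → ℝ) : Set (Fin n → ℝ) :=
  {x | (∑ i, x i) = w Finset.univ ∧ ∀ S : Finset (Fin n), w S ≤ ∑ i ∈ S, x i}

/-- The marginal vector `m_σ^w`. -/
noncomputable def margVec {n : ℕ} (w : Finset (Fin n) → ℝ) (σ : Equiv.Perm (Fin n))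
    (i : Fin n) : ℝ :=
  w (insert i (Finset.univ.filter (fun j => σ j < σ i))) -
    w (Finset.univ.filter (fun j => σ j < σ i))

/-- The Weber set: the convex hull of all marginal vectors. -/
noncomputable def weber {n : ℕ} (w : Finset (Fin n) → ℝ) : Set (Fin n → ℝ) :=
  convexHull ℝ {m | ∃ σ : Equiv.Perm (Fin n), m = margVec w σ}

/-- The maximal surplus `s_{ij}(x,w) = max {w(S) - x(S) : i ∈ S, j ∉ S}`. -/
noncomputable def surplus {n : ℕ} (w : Finset (Fin n) → ℝ) (x : Fin n → ℝ)
    (i j : Fin n) : ℝ :=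
  sSup {r : ℝ | ∃ S : Finset (Fin n), i ∈ S ∧ j ∉ S ∧ r = w S - ∑ m ∈ S, x m}

/-- The prekernel of a game. -/
def prekernel {n : ℕ} (w : Finset (Fin n) → ℝ) : Set (Fin n → ℝ) :=
  {x | (∑ i, x i) = w Finset.univ ∧
    ∀ i j : Fin n, i ≠ j → surplus w x i j = surplus w x j i}

/-- Shapley value of the game `w_A`:
`φ_i(w_A) = v({i}) + Δ ∑_{T∈N₁, i∈T} α_T / |T|`. -/

private lemma choose_ratio {m a j : ℕ} (ha : a ≤ m) (hj : j ≤ m - a) :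
    ((m - a).choose j : ℝ) * ((m.choose (a + j) : ℝ))⁻¹
      = ((a + j).choose a : ℝ) * ((m.choose a : ℝ))⁻¹ := by
  have haj : a + j ≤ m := by omega
  have h1 : (0:ℝ) < m.choose (a+j) := by exact_mod_cast Nat.choose_pos haj
  have h2 : (0:ℝ) < m.choose a := by exact_mod_cast Nat.choose_pos ha
  have key : m.choose (a+j) * (a+j).choose a = m.choose a * (m - a).choose j := by
    have := Nat.choose_mul (n := m) (Nat.le_add_right a j)
    simpa using this
  have keyR : ((m.choose (a+j)) : ℝ) * (((a+j).choose a) : ℝ)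
      = ((m.choose a) : ℝ) * (((m-a).choose j) : ℝ) := by exact_mod_cast key
  rw [← div_eq_mul_inv, ← div_eq_mul_inv, div_eq_div_iff h1.ne' h2.ne']
  linear_combination -keyR

private lemma sum_inv_choose {n : ℕ} (s : Finset (Fin n)) :
    ∑ S ∈ s.powerset, ((s.card.choose S.card : ℝ))⁻¹ = (s.card : ℝ) + 1 := by
  rw [Finset.sum_powerset_apply_card (fun k => ((s.card.choose k : ℝ))⁻¹)]
  have h1 : ∀ j ∈ Finset.range (s.card + 1),
      (s.card).choose j • ((s.card.choose j : ℝ))⁻¹ = 1 := by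
    intro j hj
    have hj' : j ≤ s.card := by have := Finset.mem_range.mp hj; omega
    have hpos : (0:ℝ) < s.card.choose j := by exact_mod_cast Nat.choose_pos hj'
    rw [nsmul_eq_mul, mul_inv_cancel₀ (ne_of_gt hpos)]
  rw [Finset.sum_congr rfl h1]
  simp

private lemma sum_inv_choose_filter {n : ℕ} (s t : Finset (Fin n)) (hts : t ⊆ s) :
    ∑ S ∈ s.powerset.filter (fun S => t ⊆ S), ((s.card.choose S.card : ℝ))⁻¹
      = ((s.card : ℝ) + 1) / ((t.card : ℝ) + 1) := by
  classical
  have ha : t.card ≤ s.card := Finset.card_le_card hts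
  have hbij : ∑ S ∈ s.powerset.filter (fun S => t ⊆ S), ((s.card.choose S.card : ℝ))⁻¹
      = ∑ R ∈ (s \ t).powerset, ((s.card.choose (t.card + R.card) : ℝ))⁻¹ := by
    refine Finset.sum_nbij' (fun S => S \ t) (fun R => R ∪ t) ?_ ?_ ?_ ?_ ?_
    · intro S hS
      simp only [Finset.mem_filter, Finset.mem_powerset] at hS ⊢
      exact Finset.sdiff_subset_sdiff hS.1 (Finset.Subset.refl t)
    · intro R hR
      simp only [Finset.mem_powerset] at hR
      simp only [Finset.mem_filter, Finset.mem_powerset]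
      exact ⟨Finset.union_subset (hR.trans Finset.sdiff_subset) hts,
        Finset.subset_union_right⟩
    · intro S hS
      simp only [Finset.mem_filter, Finset.mem_powerset] at hS
      exact Finset.sdiff_union_of_subset hS.2
    · intro R hR
      simp only [Finset.mem_powerset] at hR
      have hdisj : Disjoint R t :=
        Finset.disjoint_left.mpr fun x hx => (Finset.mem_sdiff.mp (hR hx)).2
      show (R ∪ t) \ t = R
      exact Finset.union_sdiff_cancel_right hdisj
    · intro S hS
      simp only [Finset.mem_filter, Finset.mem_powerset] at hS
      have hcard : t.card ≤ S.card := Finset.card_le_card hS.2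
      show ((s.card.choose S.card : ℝ))⁻¹ = ((s.card.choose (t.card + (S \ t).card) : ℝ))⁻¹
      have heq : t.card + (S \ t).card = S.card := by
        rw [Finset.card_sdiff_of_subset hS.2]; omega
      rw [heq]
  rw [hbij, Finset.sum_powerset_apply_card (fun k => ((s.card.choose (t.card + k) : ℝ))⁻¹)]
  have hcard : (s \ t).card = s.card - t.card := Finset.card_sdiff_of_subset hts
  rw [hcard]
  have hterm : ∀ j ∈ Finset.range (s.card - t.card + 1),
      (s.card - t.card).choose j • ((s.card.choose (t.card + j) : ℝ))⁻¹
        = ((t.card + j).choose t.card : ℝ) * ((s.card.choose t.card : ℝ))⁻¹ := by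
    intro j hj
    have hj' : j ≤ s.card - t.card := by have := Finset.mem_range.mp hj; omega
    rw [nsmul_eq_mul]
    exact choose_ratio ha hj'
  rw [Finset.sum_congr rfl hterm, ← Finset.sum_mul]
  have hhs : ∑ j ∈ Finset.range (s.card - t.card + 1), ((t.card + j).choose t.card : ℝ)
      = ((s.card + 1).choose (t.card + 1) : ℝ) := by
    have : ∑ j ∈ Finset.range (s.card - t.card + 1), (t.card + j).choose t.card
        = (s.card + 1).choose (t.card + 1) := by
      rw [← Nat.sum_Icc_choose s.card t.card, ← Finset.Ico_add_one_right_eq_Icc,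
        Finset.sum_Ico_eq_sum_range]
      have : s.card + 1 - t.card = s.card - t.card + 1 := by omega
      rw [this]
    exact_mod_cast this
  rw [hhs]
  have hpos : (0:ℝ) < s.card.choose t.card := by exact_mod_cast Nat.choose_pos ha
  have hkey : ((s.card : ℝ) + 1) * (s.card.choose t.card : ℝ)
      = ((s.card + 1).choose (t.card + 1) : ℝ) * ((t.card : ℝ) + 1) := by
    exact_mod_cast Nat.add_one_mul_choose_eq s.card t.card
  have ht1 : ((t.card : ℝ) + 1) ≠ 0 := by positivity
  field_simp
  linear_combination -hkey

private lemma shapley_vT {n : ℕ} (hn : 1 ≤ n) (v : Fin n → ℝ) (Δ : ℝ)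
    (T : Finset (Fin n)) (hT : 2 ≤ T.card) (i : Fin n) :
    shapley n (vTgame n v Δ T) i = v i + (if i ∈ T then Δ / (T.card : ℝ) else 0) := by
  classical
  have hE : (Finset.univ.erase i).card = n - 1 := by
    rw [Finset.card_erase_of_mem (Finset.mem_univ i), Finset.card_univ, Fintype.card_fin]
  have hn0 : (n : ℝ) ≠ 0 := by positivity
  have hncast : ((n - 1 : ℕ) : ℝ) + 1 = (n : ℝ) := by
    have : ((n - 1 : ℕ) : ℝ) = (n : ℝ) - 1 := by
      push_cast [Nat.cast_sub hn]; ring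
    rw [this]; ring
  by_cases hiT : i ∈ T
  · -- case i ∈ T
    set T' := T.erase i with hT'
    have hT'E : T' ⊆ Finset.univ.erase i := Finset.erase_subset_erase i (Finset.subset_univ T)
    have hT'card : T'.card = T.card - 1 := Finset.card_erase_of_mem hiT
    have hmarg : ∀ S ∈ (Finset.univ.erase i).powerset,
        vTgame n v Δ T (insert i S) - vTgame n v Δ T S
          = v i + (if T' ⊆ S then Δ else 0) := by
      intro S hS
      have hiS : i ∉ S := fun h =>
        (Finset.mem_erase.mp (Finset.mem_powerset.mp hS h)).1 rfl
      have h1 : T ⊆ insert i S ↔ T' ⊆ S := Finset.subset_insert_iff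
      have h2 : ¬ T ⊆ S := fun h => hiS (h hiT)
      unfold vTgame
      rw [if_neg h2]
      by_cases h3 : T' ⊆ S
      · rw [if_pos (h1.mpr h3), if_pos h3, Finset.sum_insert hiS]; ring
      · rw [if_neg (fun h => h3 (h1.mp h)), if_neg h3, Finset.sum_insert hiS]; ring
    have key : shapley n (vTgame n v Δ T) i
        = (1 / (n:ℝ)) * ∑ S ∈ (Finset.univ.erase i).powerset,
            ((Nat.choose (n-1) S.card : ℝ))⁻¹ * (v i + (if T' ⊆ S then Δ else 0)) := by
      unfold shapley
      congr 1
      exact Finset.sum_congr rfl fun S hS => by rw [hmarg S hS]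
    rw [key]
    have split : ∑ S ∈ (Finset.univ.erase i).powerset,
        ((Nat.choose (n-1) S.card : ℝ))⁻¹ * (v i + (if T' ⊆ S then Δ else 0))
        = v i * ∑ S ∈ (Finset.univ.erase i).powerset, ((Nat.choose (n-1) S.card : ℝ))⁻¹
          + Δ * ∑ S ∈ (Finset.univ.erase i).powerset.filter (fun S => T' ⊆ S),
              ((Nat.choose (n-1) S.card : ℝ))⁻¹ := by
      rw [Finset.sum_filter, Finset.mul_sum, Finset.mul_sum, ← Finset.sum_add_distrib]
      refine Finset.sum_congr rfl fun S hS => ?_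
      by_cases h : T' ⊆ S <;> simp [h] <;> ring
    rw [split]
    have hs1 := sum_inv_choose (Finset.univ.erase i)
    have hs2 := sum_inv_choose_filter (Finset.univ.erase i) T' hT'E
    rw [hE] at hs1 hs2
    rw [hs1, hs2, hncast, hT'card]
    have hTc : ((T.card - 1 : ℕ) : ℝ) + 1 = (T.card : ℝ) := by
      have h1 : (1:ℕ) ≤ T.card := by omega
      push_cast [Nat.cast_sub h1]; ring
    rw [hTc, if_pos hiT]
    have hTc0 : (T.card : ℝ) ≠ 0 := by
      have : 0 < T.card := by omega
      positivity
    field_simp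
  · -- case i ∉ T
    have hmarg : ∀ S ∈ (Finset.univ.erase i).powerset,
        vTgame n v Δ T (insert i S) - vTgame n v Δ T S = v i := by
      intro S hS
      have hiS : i ∉ S := fun h =>
        (Finset.mem_erase.mp (Finset.mem_powerset.mp hS h)).1 rfl
      have h1 : T ⊆ insert i S ↔ T ⊆ S := by
        constructor
        · intro h x hx
          rcases Finset.mem_insert.mp (h hx) with h' | h'
          · exact absurd (h' ▸ hx) hiT
          · exact h'
        · intro h; exact h.trans (Finset.subset_insert i S)
      unfold vTgame
      by_cases h3 : T ⊆ S
      · rw [if_pos (h1.mpr h3), if_pos h3, Finset.sum_insert hiS]; ring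
      · rw [if_neg (fun h => h3 (h1.mp h)), if_neg h3, Finset.sum_insert hiS]; ring
    have key : shapley n (vTgame n v Δ T) i
        = (1 / (n:ℝ)) * ∑ S ∈ (Finset.univ.erase i).powerset,
            ((Nat.choose (n-1) S.card : ℝ))⁻¹ * v i := by
      unfold shapley
      congr 1
      exact Finset.sum_congr rfl fun S hS => by rw [hmarg S hS]
    rw [key, ← Finset.sum_mul]
    have hs1 := sum_inv_choose (Finset.univ.erase i)
    rw [hE] at hs1
    rw [hs1, hncast, if_neg hiT]
    field_simp
    ring

private lemma shapley_sum {n : ℕ} {ι : Type*} [DecidableEq ι] (F : Finset ι) (c : ι → ℝ)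
    (w : ι → Finset (Fin n) → ℝ) (i : Fin n) :
    shapley n (fun S => ∑ T ∈ F, c T * w T S) i = ∑ T ∈ F, c T * shapley n (w T) i := by
  have h : ∀ S : Finset (Fin n),
      ((Nat.choose (n-1) S.card : ℝ))⁻¹ *
        ((∑ T ∈ F, c T * w T (insert i S)) - ∑ T ∈ F, c T * w T S)
      = ∑ T ∈ F, c T * (((Nat.choose (n-1) S.card : ℝ))⁻¹ * (w T (insert i S) - w T S)) := by
    intro S
    rw [← Finset.sum_sub_distrib, Finset.mul_sum]
    exact Finset.sum_congr rfl fun T _ => by ring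
  simp only [shapley, h]
  rw [Finset.sum_comm, Finset.mul_sum]
  exact Finset.sum_congr rfl fun T _ => by
    rw [← Finset.mul_sum]; ring

theorem stmt6 (n : ℕ) (hn : 2 ≤ n) (v : Fin n → ℝ) (vN : ℝ) (Δ : ℝ)
    (hΔdef : Δ = vN - ∑ i, v i)
    (A : Finset (Fin n) → ℝ) (hA0 : ∀ T ∈ coalN1 n, 0 ≤ A T)
    (hA1 : ∑ T ∈ coalN1 n, A T = 1) (i : Fin n) :
    shapley n (wAgame n v Δ A) i =
      v i + Δ * ∑ T ∈ (coalN1 n).filter (fun T => i ∈ T), A T / (T.card : ℝ) := by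
  classical
  have hwA : wAgame n v Δ A = fun S => ∑ T ∈ coalN1 n, A T * vTgame n v Δ T S := rfl
  rw [hwA, shapley_sum]
  have hstep : ∀ T ∈ coalN1 n, A T * shapley n (vTgame n v Δ T) i
      = A T * (v i + (if i ∈ T then Δ / (T.card : ℝ) else 0)) := by
    intro T hT
    rw [shapley_vT (by omega) v Δ T ((Finset.mem_filter.mp hT).2) i]
  rw [Finset.sum_congr rfl hstep]
  simp only [mul_add, Finset.sum_add_distrib, mul_ite, mul_zero]
  rw [← Finset.sum_filter, ← Finset.sum_mul, hA1, one_mul, Finset.mul_sum]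
  congr 1
  exact Finset.sum_congr rfl fun T _ => by ring
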